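/- Let v ∈ ℝ^N be any probability vector and let ξ > 0. If the integer t satisfies t ≥ (z/(z−2))·log(1/(ξ·l)), where l = p₀·e^{−2ε(N−1)} is the smallest entry of the stationary distribution p₀·π, then the total variation distance between T^t v and the stationary distribution is at most ξ: (1/2)·∑_{k=0}^{N−1} |(T^t v)_k − p₀·π_k| ≤ ξ. In particular the mixing time of the TSAC Markov chain is O(2^n). -/

import Mathlib

open Real Matrix Finset

/-- The TSAC transition matrix `T` on the diagonal of the computation-qubit density
matrix: `N = 2^n`, `z = e^ε + e^{-ε}`, `T 0 0 = T 0 1 = e^ε/z`,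
`T (N-1) (N-2) = T (N-1) (N-1) = e^{-ε}/z`, and for `0 < i < N-1`,
`T i (i-1) = e^{-ε}/z`, `T i (i+1) = e^ε/z`; all other entries vanish. -/
noncomputable def Tmat (n : ℕ) (ε : ℝ) : Matrix (Fin (2 ^ n)) (Fin (2 ^ n)) ℝ :=
  fun i j =>
    if (i : ℕ) = 0 then
      if (j : ℕ) ≤ 1 then Real.exp ε / (Real.exp ε + Real.exp (-ε)) else 0
    else if (i : ℕ) = 2 ^ n - 1 then
      if 2 ^ n - 2 ≤ (j : ℕ) then Real.exp (-ε) / (Real.exp ε + Real.exp (-ε)) else 0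
    else if (j : ℕ) + 1 = (i : ℕ) then Real.exp (-ε) / (Real.exp ε + Real.exp (-ε))
    else if (j : ℕ) = (i : ℕ) + 1 then Real.exp ε / (Real.exp ε + Real.exp (-ε))
    else 0

noncomputable def Tgen (N : ℕ) (ε : ℝ) : Matrix (Fin N) (Fin N) ℝ :=
  fun i j =>
    if (i : ℕ) = 0 then
      if (j : ℕ) ≤ 1 then Real.exp ε / (Real.exp ε + Real.exp (-ε)) else 0
    else if (i : ℕ) = N - 1 then
      if N - 2 ≤ (j : ℕ) then Real.exp (-ε) / (Real.exp ε + Real.exp (-ε)) else 0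
    else if (j : ℕ) + 1 = (i : ℕ) then Real.exp (-ε) / (Real.exp ε + Real.exp (-ε))
    else if (j : ℕ) = (i : ℕ) + 1 then Real.exp ε / (Real.exp ε + Real.exp (-ε))
    else 0

noncomputable def za (ε : ℝ) : ℝ := Real.exp ε / (Real.exp ε + Real.exp (-ε))
noncomputable def zb (ε : ℝ) : ℝ := Real.exp (-ε) / (Real.exp ε + Real.exp (-ε))

-- decomposition lemma
lemma Tgen_eq (N : ℕ) (hN : 2 ≤ N) (ε : ℝ) (i j : Fin N) :
    Tgen N ε i j = (if (i : ℕ) = (j : ℕ) - 1 then za ε else 0)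
      + (if (i : ℕ) = min ((j : ℕ) + 1) (N - 1) then zb ε else 0) := by
  rcases i with ⟨i, hi⟩
  rcases j with ⟨j, hj⟩
  simp only [Tgen, za, zb]
  split_ifs <;> first
    | (exfalso; omega)
    | ring

lemma sum_ite_coe (N : ℕ) (m : ℕ) (hm : m < N) (c : ℝ) :
    ∑ i : Fin N, (if (i : ℕ) = m then c else 0) = c := by
  rw [Finset.sum_congr rfl (g := fun i => if i = (⟨m, hm⟩ : Fin N) then c else 0)
    (fun i _ => by simp [Fin.ext_iff])]
  simp

lemma colsum (N : ℕ) (hN : 2 ≤ N) (ε : ℝ) (j : Fin N) :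
    ∑ i, Tgen N ε i j = za ε + zb ε := by
  have h1 : (j : ℕ) - 1 < N := lt_of_le_of_lt (Nat.sub_le _ _) j.2
  have h2 : min ((j : ℕ) + 1) (N - 1) < N := by
    have := j.2; omega
  simp only [Tgen_eq N hN ε _ j, Finset.sum_add_distrib,
    sum_ite_coe N _ h1, sum_ite_coe N _ h2]

lemma sum_mulVec (N : ℕ) (hN : 2 ≤ N) (ε : ℝ) (x : Fin N → ℝ) :
    ∑ i, (Tgen N ε).mulVec x i = (za ε + zb ε) * ∑ j, x j := by
  simp only [Matrix.mulVec, dotProduct]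
  rw [Finset.sum_comm, Finset.mul_sum]
  refine Finset.sum_congr rfl fun j _ => ?_
  rw [← Finset.sum_mul, colsum N hN ε j]

lemma sum_ite_coe_f (N : ℕ) (m : ℕ) (hm : m < N) (f : Fin N → ℝ) :
    ∑ j : Fin N, (if (j : ℕ) = m then f j else 0) = f ⟨m, hm⟩ := by
  rw [Finset.sum_congr rfl (g := fun j => if j = (⟨m, hm⟩ : Fin N) then f j else 0)
    (fun j _ => by simp [Fin.ext_iff])]
  simp

lemma row_zero (N : ℕ) (hN : 2 ≤ N) (ε : ℝ) (x : Fin N → ℝ) :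
    (Tgen N ε).mulVec x ⟨0, by omega⟩
      = za ε * (x ⟨0, by omega⟩ + x ⟨1, by omega⟩) := by
  have key : ∀ j : Fin N, Tgen N ε ⟨0, by omega⟩ j
      = (if (j : ℕ) = 0 then za ε else 0) + (if (j : ℕ) = 1 then za ε else 0) := by
    intro ⟨j, hj⟩
    simp only [Tgen, za]
    split_ifs <;> first | (exfalso; omega) | ring
  simp only [Matrix.mulVec, dotProduct]
  rw [Finset.sum_congr rfl fun j _ => by rw [key j, add_mul, ite_mul, ite_mul, zero_mul]]
  rw [Finset.sum_add_distrib, sum_ite_coe_f N 0 (by omega), sum_ite_coe_f N 1 (by omega)]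
  ring

lemma row_mid (N : ℕ) (hN : 2 ≤ N) (ε : ℝ) (x : Fin N → ℝ) (i : ℕ)
    (h1 : 0 < i) (h2 : i < N - 1) :
    (Tgen N ε).mulVec x ⟨i, by omega⟩
      = zb ε * x ⟨i - 1, by omega⟩ + za ε * x ⟨i + 1, by omega⟩ := by
  have key : ∀ j : Fin N, Tgen N ε ⟨i, by omega⟩ j
      = (if (j : ℕ) = i - 1 then zb ε else 0) + (if (j : ℕ) = i + 1 then za ε else 0) := by
    intro ⟨j, hj⟩
    simp only [Tgen, za, zb]
    split_ifs <;> first | (exfalso; omega) | ring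
  simp only [Matrix.mulVec, dotProduct]
  rw [Finset.sum_congr rfl fun j _ => by rw [key j, add_mul, ite_mul, ite_mul, zero_mul]]
  rw [Finset.sum_add_distrib, sum_ite_coe_f N (i-1) (by omega), sum_ite_coe_f N (i+1) (by omega)]

noncomputable def cum {N : ℕ} (x : Fin N → ℝ) (k : ℕ) : ℝ :=
  ∑ j ∈ Finset.univ.filter (fun j : Fin N => (j : ℕ) ≤ k), x j

noncomputable def cumm {N : ℕ} (x : Fin N → ℝ) : ℕ → ℝ
  | 0 => 0
  | (k+1) => cum x k

lemma cum_eq_sum_ite {N : ℕ} (x : Fin N → ℝ) (k : ℕ) :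
    cum x k = ∑ j : Fin N, (if (j : ℕ) ≤ k then x j else 0) := by
  rw [cum, Finset.sum_filter]

lemma cum_zero {N : ℕ} (x : Fin N → ℝ) (h : 0 < N) : cum x 0 = x ⟨0, h⟩ := by
  rw [cum_eq_sum_ite]
  rw [Finset.sum_congr rfl (g := fun j : Fin N => if (j : ℕ) = 0 then x j else 0)
    (fun j _ => by simp [Nat.le_zero])]
  rw [sum_ite_coe_f N 0 h]

lemma cum_succ {N : ℕ} (x : Fin N → ℝ) (k : ℕ) (h : k + 1 < N) :
    cum x (k+1) = cum x k + x ⟨k+1, h⟩ := by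
  have hpt : ∀ j : Fin N, (if (j : ℕ) ≤ k+1 then x j else 0)
      = (if (j : ℕ) ≤ k then x j else 0) + (if (j : ℕ) = k+1 then x j else 0) := by
    intro j
    split_ifs <;> first | (exfalso; omega) | ring
  rw [cum_eq_sum_ite, cum_eq_sum_ite]
  rw [Finset.sum_congr rfl fun j _ => hpt j]
  rw [Finset.sum_add_distrib, sum_ite_coe_f N (k+1) h]

lemma cum_total {N : ℕ} (x : Fin N → ℝ) (k : ℕ) (h : N - 1 ≤ k) :
    cum x k = ∑ j, x j := by
  rw [cum, Finset.filter_true_of_mem (fun j _ => by have := j.2; omega)]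

lemma val_eq_cum {N : ℕ} (x : Fin N → ℝ) (k : ℕ) (h : k < N) :
    x ⟨k, h⟩ = cum x k - cumm x k := by
  cases k with
  | zero => rw [cum_zero x h, cumm]; ring
  | succ m => rw [cum_succ x m h, cumm]; ring

lemma cum_sub {N : ℕ} (x y : Fin N → ℝ) (k : ℕ) :
    cum (x - y) k = cum x k - cum y k := by
  simp [cum, Finset.sum_sub_distrib]

lemma cum_step (N : ℕ) (hN : 2 ≤ N) (ε : ℝ) (x : Fin N → ℝ) :
    ∀ k, k ≤ N - 2 →
      cum ((Tgen N ε).mulVec x) k = zb ε * cumm x k + za ε * cum x (k+1) := by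
  intro k
  induction k with
  | zero =>
    intro hk
    rw [cum_zero _ (by omega), row_zero N hN ε x, cum_succ x 0 (by omega),
      cum_zero x (by omega), cumm]
    ring
  | succ m ih =>
    intro hk
    have hm := ih (by omega)
    have e1 := row_mid N hN ε x (m+1) (by omega) (by omega)
    simp only [Nat.add_sub_cancel] at e1
    have e2 : x ⟨m, by omega⟩ = cum x m - cumm x m := val_eq_cum x m (by omega)
    have e3 : x ⟨m+1+1, by omega⟩ = cum x (m+2) - cum x (m+1) := by
      rw [cum_succ x (m+1) (by omega)]; ring
    rw [cum_succ _ m (by omega), hm, e1, e2, e3]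
    show _ = zb ε * cum x m + _
    ring

noncomputable def Gfun {N : ℕ} (ε : ℝ) (x : Fin N → ℝ) (k : ℕ) : ℝ :=
  Real.exp ε ^ k * cum x k

noncomputable def Gmfun {N : ℕ} (ε : ℝ) (x : Fin N → ℝ) : ℕ → ℝ
  | 0 => 0
  | (m+1) => Gfun ε x m

noncomputable def phi {N : ℕ} (ε : ℝ) (x : Fin N → ℝ) : ℝ :=
  ∑ k ∈ Finset.range (N-1), (Gfun ε x k)^2

lemma phi_nonneg {N : ℕ} (ε : ℝ) (x : Fin N → ℝ) : 0 ≤ phi ε x :=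
  Finset.sum_nonneg fun k _ => sq_nonneg _

lemma sum_Gm_sq_le (N : ℕ) (hN : 2 ≤ N) (ε : ℝ) (x : Fin N → ℝ) :
    ∑ k ∈ Finset.range (N-1), (Gmfun ε x k)^2 ≤ phi ε x := by
  have h : N - 1 = (N-2) + 1 := by omega
  rw [h, Finset.sum_range_succ']
  simp only [Gmfun]
  rw [phi, h]
  have : ∑ k ∈ Finset.range (N-2), (Gfun ε x k)^2
      ≤ ∑ k ∈ Finset.range (N-2+1), (Gfun ε x k)^2 := by
    apply Finset.sum_le_sum_of_subset_of_nonneg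
    · exact Finset.range_subset_range.2 (by omega)
    · intro k _ _; exact sq_nonneg _
  simpa using this

lemma sum_G_succ_sq_le (N : ℕ) (hN : 2 ≤ N) (ε : ℝ) (x : Fin N → ℝ)
    (hx : ∑ j, x j = 0) :
    ∑ k ∈ Finset.range (N-1), (Gfun ε x (k+1))^2 ≤ phi ε x := by
  have h : N - 1 = (N-2) + 1 := by omega
  rw [h, Finset.sum_range_succ]
  have hG : Gfun ε x (N-2+1) = 0 := by
    rw [Gfun, cum_total x _ (by omega), hx, mul_zero]
  rw [hG]
  have hphi : phi ε x = ∑ k ∈ Finset.range (N-2), (Gfun ε x (k+1))^2 + (Gfun ε x 0)^2 := by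
    rw [phi, h, Finset.sum_range_succ']
  nlinarith [sq_nonneg (Gfun ε x 0)]

lemma phi_step (N : ℕ) (hN : 2 ≤ N) (ε : ℝ) (x : Fin N → ℝ) (hx : ∑ j, x j = 0) :
    phi ε ((Tgen N ε).mulVec x)
      ≤ (2 / (Real.exp ε + Real.exp (-ε)))^2 * phi ε x := by
  set z := Real.exp ε + Real.exp (-ε) with hzdef
  have hz : 0 < z := by positivity
  have key : ∀ k ∈ Finset.range (N-1),
      (Gfun ε ((Tgen N ε).mulVec x) k)^2
        ≤ (1/z)^2 * (2 * (Gmfun ε x k)^2 + 2 * (Gfun ε x (k+1))^2) := by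
    intro k hk
    have hk' : k ≤ N - 2 := by have := Finset.mem_range.1 hk; omega
    have hrep : Gfun ε ((Tgen N ε).mulVec x) k
        = (1/z) * (Gmfun ε x k + Gfun ε x (k+1)) := by
      rw [Gfun, cum_step N hN ε x k hk']
      cases k with
      | zero =>
        simp only [Gmfun, cumm, Gfun, za, ← hzdef]
        ring
      | succ m =>
        simp only [Gmfun, cumm, Gfun, za, zb, ← hzdef]
        have hE : Real.exp ε ^ (m+1) * Real.exp (-ε) = Real.exp ε ^ m := by
          rw [pow_succ, mul_assoc, ← Real.exp_add]; simp
        linear_combination (cum x m / z) * hE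
    rw [hrep]
    have h2 : (Gmfun ε x k + Gfun ε x (k+1))^2
        ≤ 2 * (Gmfun ε x k)^2 + 2 * (Gfun ε x (k+1))^2 := by
      nlinarith [sq_nonneg (Gmfun ε x k - Gfun ε x (k+1))]
    calc ((1/z) * (Gmfun ε x k + Gfun ε x (k+1)))^2
        = (1/z)^2 * (Gmfun ε x k + Gfun ε x (k+1))^2 := by ring
      _ ≤ (1/z)^2 * (2 * (Gmfun ε x k)^2 + 2 * (Gfun ε x (k+1))^2) := by
          apply mul_le_mul_of_nonneg_left h2 (by positivity)
  have h1 : phi ε ((Tgen N ε).mulVec x)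
      ≤ ∑ k ∈ Finset.range (N-1),
          (1/z)^2 * (2 * (Gmfun ε x k)^2 + 2 * (Gfun ε x (k+1))^2) :=
    Finset.sum_le_sum key
  have h2 := sum_Gm_sq_le N hN ε x
  have h3 := sum_G_succ_sq_le N hN ε x hx
  have h4 : ∑ k ∈ Finset.range (N-1),
      (1/z)^2 * (2 * (Gmfun ε x k)^2 + 2 * (Gfun ε x (k+1))^2)
      = 2 * (1/z)^2 * (∑ k ∈ Finset.range (N-1), (Gmfun ε x k)^2)
        + 2 * (1/z)^2 * (∑ k ∈ Finset.range (N-1), (Gfun ε x (k+1))^2) := by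
    rw [Finset.mul_sum, Finset.mul_sum, ← Finset.sum_add_distrib]
    exact Finset.sum_congr rfl fun k _ => by ring
  have hc : (0:ℝ) ≤ 2 * (1/z)^2 := by positivity
  have h5 : phi ε ((Tgen N ε).mulVec x)
      ≤ 2 * (1/z)^2 * phi ε x + 2 * (1/z)^2 * phi ε x := by
    rw [h4] at h1
    nlinarith [mul_le_mul_of_nonneg_left h2 hc, mul_le_mul_of_nonneg_left h3 hc]
  calc phi ε ((Tgen N ε).mulVec x)
      ≤ 2 * (1/z)^2 * phi ε x + 2 * (1/z)^2 * phi ε x := h5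
    _ = (2/z)^2 * phi ε x := by ring

lemma row_last (N : ℕ) (hN : 2 ≤ N) (ε : ℝ) (x : Fin N → ℝ) :
    (Tgen N ε).mulVec x ⟨N-1, by omega⟩
      = zb ε * (x ⟨N-2, by omega⟩ + x ⟨N-1, by omega⟩) := by
  have key : ∀ j : Fin N, Tgen N ε ⟨N-1, by omega⟩ j
      = (if (j : ℕ) = N-2 then zb ε else 0) + (if (j : ℕ) = N-1 then zb ε else 0) := by
    intro ⟨j, hj⟩
    simp only [Tgen, zb]
    split_ifs <;> first | (exfalso; omega) | ring
  simp only [Matrix.mulVec, dotProduct]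
  rw [Finset.sum_congr rfl fun j _ => by rw [key j, add_mul, ite_mul, ite_mul, zero_mul]]
  rw [Finset.sum_add_distrib, sum_ite_coe_f N (N-2) (by omega), sum_ite_coe_f N (N-1) (by omega)]
  ring

lemma za_add_zb (ε : ℝ) : za ε + zb ε = 1 := by
  rw [za, zb, ← add_div, div_self (by positivity)]

lemma iterate_bound (N : ℕ) (hN : 2 ≤ N) (ε : ℝ) (x : Fin N → ℝ)
    (hx : ∑ j, x j = 0) (t : ℕ) :
    (∑ i, (((Tgen N ε)^t).mulVec x) i = 0)
      ∧ phi ε (((Tgen N ε)^t).mulVec x)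
        ≤ ((2 / (Real.exp ε + Real.exp (-ε)))^2)^t * phi ε x := by
  induction t with
  | zero => simp [Matrix.one_mulVec, hx]
  | succ t ih =>
    have hrw : ((Tgen N ε)^(t+1)).mulVec x
        = (Tgen N ε).mulVec (((Tgen N ε)^t).mulVec x) := by
      rw [pow_succ', ← Matrix.mulVec_mulVec]
    constructor
    · rw [hrw, sum_mulVec N hN ε _, ih.1, mul_zero]
    · rw [hrw]
      calc phi ε ((Tgen N ε).mulVec (((Tgen N ε)^t).mulVec x))
          ≤ (2 / (Real.exp ε + Real.exp (-ε)))^2 * phi ε (((Tgen N ε)^t).mulVec x) :=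
            phi_step N hN ε _ ih.1
        _ ≤ (2 / (Real.exp ε + Real.exp (-ε)))^2
            * (((2 / (Real.exp ε + Real.exp (-ε)))^2)^t * phi ε x) := by
            apply mul_le_mul_of_nonneg_left ih.2 (by positivity)
        _ = ((2 / (Real.exp ε + Real.exp (-ε)))^2)^(t+1) * phi ε x := by ring

lemma stationary (N : ℕ) (hN : 2 ≤ N) (ε : ℝ) :
    (Tgen N ε).mulVec (fun k : Fin N => Real.exp (-(2*ε)) ^ (k:ℕ))
      = (fun k : Fin N => Real.exp (-(2*ε)) ^ (k:ℕ)) := by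
  set E := Real.exp ε with hE
  set F := Real.exp (-ε) with hF
  have hEF : E * F = 1 := by rw [hE, hF, ← Real.exp_add]; simp
  have hw : Real.exp (-(2*ε)) = F * F := by rw [hF, ← Real.exp_add]; ring_nf
  have hzne : E + F ≠ 0 := by positivity
  funext i
  rcases i with ⟨i, hi⟩
  rcases eq_or_ne i 0 with h0 | h0
  · subst h0
    have := row_zero N hN ε (fun k : Fin N => Real.exp (-(2*ε)) ^ (k:ℕ))
    rw [this]
    simp only [hw, za, ← hE, ← hF, pow_zero, pow_one]
    field_simp
    linear_combination F * hEF
  · rcases eq_or_ne i (N-1) with hL | hL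
    · subst hL
      have := row_last N hN ε (fun k : Fin N => Real.exp (-(2*ε)) ^ (k:ℕ))
      rw [this]
      simp only [hw, zb, ← hE, ← hF]
      obtain ⟨m, hm⟩ : ∃ m, N - 1 = m + 1 := ⟨N-2, by omega⟩
      have hm2 : N - 2 = m := by omega
      rw [hm, hm2]
      field_simp
      linear_combination (-(F^(m*2)*F)) * hEF
    · have hmid : 0 < i ∧ i < N - 1 := by omega
      have := row_mid N hN ε (fun k : Fin N => Real.exp (-(2*ε)) ^ (k:ℕ)) i hmid.1 hmid.2
      rw [this]
      simp only [hw, za, zb, ← hE, ← hF]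
      obtain ⟨m, hm⟩ : ∃ m, i = m + 1 := ⟨i-1, by omega⟩
      subst hm
      simp only [Nat.add_sub_cancel]
      field_simp
      linear_combination (-((F*F)^m*(1-F^2)*F)) * hEF

lemma stationary_pow (N : ℕ) (hN : 2 ≤ N) (ε : ℝ) (t : ℕ) :
    ((Tgen N ε)^t).mulVec (fun k : Fin N => Real.exp (-(2*ε)) ^ (k:ℕ))
      = (fun k : Fin N => Real.exp (-(2*ε)) ^ (k:ℕ)) := by
  induction t with
  | zero => simp [Matrix.one_mulVec]
  | succ t ih =>
    rw [pow_succ', ← Matrix.mulVec_mulVec, ih, stationary N hN ε]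

lemma abs_sum_le_two_cum (N : ℕ) (hN : 2 ≤ N) (y : Fin N → ℝ) (hy : ∑ i, y i = 0) :
    ∑ i, |y i| ≤ 2 * ∑ k ∈ Finset.range (N-1), |cum y k| := by
  have h1 : ∑ i, |y i| = ∑ k ∈ Finset.range N, |cum y k - cumm y k| := by
    rw [← Fin.sum_univ_eq_sum_range]
    exact Finset.sum_congr rfl fun i _ => by
      rw [show (i : Fin N) = ⟨(i:ℕ), i.2⟩ from rfl, val_eq_cum y _ i.2]
  have h2 : ∑ k ∈ Finset.range N, |cum y k - cumm y k|
      ≤ ∑ k ∈ Finset.range N, (|cum y k| + |cumm y k|) :=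
    Finset.sum_le_sum fun k _ => abs_sub _ _
  have hNs : N = (N-1) + 1 := by omega
  have h3 : ∑ k ∈ Finset.range N, |cum y k|
      = ∑ k ∈ Finset.range (N-1), |cum y k| := by
    rw [show Finset.range N = Finset.range ((N-1)+1) from by rw [← hNs],
      Finset.sum_range_succ, cum_total y _ (by omega), hy, abs_zero, add_zero]
  have h4 : ∑ k ∈ Finset.range N, |cumm y k|
      = ∑ k ∈ Finset.range (N-1), |cum y k| := by
    rw [show Finset.range N = Finset.range ((N-1)+1) from by rw [← hNs],
      Finset.sum_range_succ']
    simp only [cumm, abs_zero, add_zero]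
  rw [h1, Finset.sum_add_distrib] at *
  linarith

lemma cum_abs_CS (N : ℕ) (ε : ℝ) (y : Fin N → ℝ) :
    (∑ k ∈ Finset.range (N-1), |cum y k|)^2
      ≤ (∑ k ∈ Finset.range (N-1), (Real.exp (-(2*ε)))^k) * phi ε y := by
  have hpt : ∀ k, |cum y k| = Real.exp (-ε)^k * (Real.exp ε ^ k * |cum y k|) := by
    intro k
    rw [← mul_assoc, ← mul_pow, ← Real.exp_add]
    simp
  have hCS := Finset.sum_mul_sq_le_sq_mul_sq (Finset.range (N-1))
    (fun k => Real.exp (-ε)^k) (fun k => Real.exp ε ^ k * |cum y k|)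
  have h1 : ∑ k ∈ Finset.range (N-1), |cum y k|
      = ∑ k ∈ Finset.range (N-1), Real.exp (-ε)^k * (Real.exp ε ^ k * |cum y k|) :=
    Finset.sum_congr rfl fun k _ => hpt k
  have h2 : ∀ k, (Real.exp (-ε)^k)^2 = (Real.exp (-(2*ε)))^k := by
    intro k
    have e : Real.exp (-ε)^2 = Real.exp (-(2*ε)) := by rw [sq, ← Real.exp_add]; ring_nf
    rw [← e, ← pow_mul, ← pow_mul, mul_comm]
  have h3 : ∀ k, (Real.exp ε ^ k * |cum y k|)^2 = (Gfun ε y k)^2 := by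
    intro k
    rw [Gfun, mul_pow, mul_pow, sq_abs]
  rw [h1]
  calc (∑ k ∈ Finset.range (N-1), Real.exp (-ε)^k * (Real.exp ε ^ k * |cum y k|))^2
      ≤ (∑ k ∈ Finset.range (N-1), (Real.exp (-ε)^k)^2)
        * ∑ k ∈ Finset.range (N-1), (Real.exp ε ^ k * |cum y k|)^2 := hCS
    _ = (∑ k ∈ Finset.range (N-1), (Real.exp (-(2*ε)))^k) * phi ε y := by
        rw [Finset.sum_congr rfl fun k _ => h2 k, phi,
          Finset.sum_congr rfl fun k _ => h3 k]

lemma phi_le_init (N : ℕ) (ε : ℝ) (x : Fin N → ℝ)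
    (h : ∀ k, |cum x k| ≤ 1) :
    phi ε x ≤ ∑ k ∈ Finset.range (N-1), (Real.exp (2*ε))^k := by
  apply Finset.sum_le_sum
  intro k _
  have h1 : (Gfun ε x k)^2 ≤ (Real.exp ε ^ k)^2 := by
    rw [Gfun, mul_pow]
    have hcc : cum x k ^ 2 ≤ 1 := by
      rw [← sq_abs]
      nlinarith [h k, abs_nonneg (cum x k)]
    nlinarith [mul_nonneg (sq_nonneg (Real.exp ε ^ k)) (by linarith : (0:ℝ) ≤ 1 - cum x k^2)]
  calc (Gfun ε x k)^2 ≤ (Real.exp ε ^ k)^2 := h1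
    _ = (Real.exp (2*ε))^k := by
        have e : Real.exp ε^2 = Real.exp (2*ε) := by rw [sq, ← Real.exp_add]; ring_nf
        rw [← e, ← pow_mul, ← pow_mul, mul_comm]

lemma key_ineq (w : ℝ) (hw0 : 0 < w) (hw1 : w < 1) (M : ℕ) :
    (((1-w)/(1-w^(M+1))) * w^M)^2
      * ((∑ k ∈ Finset.range M, w^k) * (∑ k ∈ Finset.range M, (w⁻¹)^k)) ≤ 1 := by
  set q := w^M with hq
  have hq0 : 0 < q := pow_pos hw0 M
  have hq1 : q ≤ 1 := pow_le_one₀ hw0.le hw1.le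
  have hwq : w * q < 1 := by nlinarith
  have hwq0 : 0 < w * q := by positivity
  have h1w : (1:ℝ) - w ≠ 0 := by intro hcon; nlinarith [sub_eq_zero.1 hcon]
  have h1wq : (1:ℝ) - w*q ≠ 0 := by intro hcon; nlinarith [sub_eq_zero.1 hcon]
  have hqne : q ≠ 0 := ne_of_gt hq0
  have hwne : w ≠ 0 := ne_of_gt hw0
  have hgeo1 : ∑ k ∈ Finset.range M, w^k = (1-q)/(1-w) := by
    rw [geom_sum_eq hw1.ne M, ← hq,
      div_eq_div_iff (sub_ne_zero.2 hw1.ne) h1w]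
    ring
  have hinv1 : w⁻¹ ≠ 1 := by
    intro hcon
    rw [inv_eq_one] at hcon
    linarith
  have hgeo2 : ∑ k ∈ Finset.range M, (w⁻¹)^k = (1-q) * w / ((1-w) * q) := by
    rw [geom_sum_eq hinv1 M, inv_pow, ← hq,
      div_eq_div_iff (sub_ne_zero.2 hinv1) (mul_ne_zero h1w hqne)]
    field_simp
  have hpow : w^(M+1) = w * q := by rw [pow_succ, hq]; ring
  rw [hgeo1, hgeo2, hpow]
  have hsimp : ((1-w)/(1-w*q) * q)^2 * ((1-q)/(1-w) * ((1-q) * w / ((1-w) * q)))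
      = w * q * (1-q)^2 / (1-w*q)^2 := by
    field_simp
  rw [hsimp, div_le_one (by nlinarith [sq_nonneg (1 - w*q)] : (0:ℝ) < (1-w*q)^2)]
  have h5 : w * q ≤ q := by nlinarith
  have h6 : (1-q)^2 ≤ (1-w*q)^2 := by nlinarith
  nlinarith

lemma pow_le_xil (z ξ l : ℝ) (hz : 2 < z) (hξ : 0 < ξ) (hl : 0 < l) (t : ℕ)
    (ht : (t:ℝ) ≥ z/(z-2) * Real.log (1/(ξ*l))) : (2/z)^t ≤ ξ * l := by
  have hz0 : 0 < z := by linarith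
  have hc0 : 0 < 2/z := by positivity
  have hc1 : 2/z < 1 := by rw [div_lt_one hz0]; linarith
  by_cases hcase : 1 ≤ ξ * l
  · exact le_trans (pow_le_one₀ hc0.le hc1.le) hcase
  · push_neg at hcase
    have hxl0 : 0 < ξ * l := by positivity
    have hL : Real.log (1/(ξ*l)) = - Real.log (ξ*l) := by
      rw [one_div, Real.log_inv]
    have hLpos : 0 < Real.log (1/(ξ*l)) := by
      apply Real.log_pos
      rw [lt_div_iff₀ hxl0]
      linarith
    have ht2 : Real.log (1/(ξ*l)) ≤ (t:ℝ) * (z-2) / z := by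
      rw [ge_iff_le, div_mul_eq_mul_div, div_le_iff₀ (by linarith)] at ht
      rw [le_div_iff₀ hz0]
      linarith [ht]
    have hlog : Real.log ((2/z)^t) ≤ Real.log (ξ*l) := by
      rw [Real.log_pow]
      have h1 : Real.log (2/z) ≤ 2/z - 1 := Real.log_le_sub_one_of_pos hc0
      have h2 : (t:ℝ) * Real.log (2/z) ≤ (t:ℝ) * (2/z - 1) :=
        mul_le_mul_of_nonneg_left h1 (Nat.cast_nonneg t)
      have h3 : (t:ℝ) * (2/z - 1) = -((t:ℝ) * (z-2)/z) := by
        field_simp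
        ring
      have h4 : -((t:ℝ)*(z-2)/z) ≤ - Real.log (1/(ξ*l)) := by linarith
      rw [hL] at h4
      linarith
    have := (Real.log_le_log_iff (by positivity) hxl0).1 hlog
    exact this

theorem main_gen (N : ℕ) (hN : 2 ≤ N) (ε : ℝ) (hε : 0 < ε)
    (v : Fin N → ℝ) (hv : ∀ k, 0 ≤ v k) (hv1 : ∑ k, v k = 1)
    (ξ : ℝ) (hξ : 0 < ξ) (t : ℕ)
    (ht' : (2 / (Real.exp ε + Real.exp (-ε)))^t
      ≤ ξ * ((1 - Real.exp (-(2*ε))) / (1 - Real.exp (-(2*ε)) ^ N)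
          * Real.exp (-(2*ε)) ^ (N-1))) :
    (1 / 2) * ∑ k : Fin N, |((Tgen N ε ^ t).mulVec v) k -
        (1 - Real.exp (-(2*ε))) / (1 - Real.exp (-(2*ε)) ^ N)
          * Real.exp (-(2*ε)) ^ (k : ℕ)| ≤ ξ := by
  set w : ℝ := Real.exp (-(2*ε)) with hwdef
  have hw0 : 0 < w := Real.exp_pos _
  have hw1 : w < 1 := by
    rw [hwdef, Real.exp_lt_one_iff]
    linarith
  have hwN1 : w ^ N < 1 := pow_lt_one₀ hw0.le hw1 (by omega)
  set p0 : ℝ := (1 - w) / (1 - w ^ N) with hp0def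
  have hp0pos : 0 < p0 := by
    apply div_pos <;> linarith
  have hpivsum : ∑ k : Fin N, w ^ (k : ℕ) = (1 - w ^ N) / (1 - w) := by
    rw [Fin.sum_univ_eq_sum_range (fun k => w ^ k) N, geom_sum_eq hw1.ne N,
      div_eq_div_iff (sub_ne_zero.2 hw1.ne) (by intro hc; nlinarith [sub_eq_zero.1 hc])]
    ring
  have hμsum : ∑ k : Fin N, p0 * w ^ (k : ℕ) = 1 := by
    have hne1 : (1:ℝ) - w ≠ 0 := ne_of_gt (by linarith)
    have hne2 : (1:ℝ) - w^N ≠ 0 := ne_of_gt (by linarith)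
    rw [← Finset.mul_sum, hpivsum, hp0def, div_mul_div_comm,
      div_eq_one_iff_eq (mul_ne_zero hne2 hne1)]
    ring
  obtain ⟨x, hxdef⟩ : ∃ x' : Fin N → ℝ, x' = v - (fun k : Fin N => p0 * w ^ (k : ℕ)) :=
    ⟨_, rfl⟩
  have hxsum : ∑ j, x j = 0 := by
    rw [hxdef]
    simp only [Pi.sub_apply]
    rw [Finset.sum_sub_distrib, hv1, hμsum]
    ring
  obtain ⟨y, hydef⟩ : ∃ y' : Fin N → ℝ, y' = ((Tgen N ε)^t).mulVec x := ⟨_, rfl⟩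
  have hysum : ∑ i, y i = 0 := by
    rw [hydef]; exact (iterate_bound N hN ε x hxsum t).1
  have hvec : ∀ k : Fin N, ((Tgen N ε ^ t).mulVec v) k - p0 * w ^ (k : ℕ) = y k := by
    intro k
    rw [hydef, hxdef, Matrix.mulVec_sub]
    have hsm : (fun k : Fin N => p0 * w ^ (k : ℕ))
        = p0 • (fun k : Fin N => w ^ (k : ℕ)) := by
      funext j; simp [smul_eq_mul]
    have hstat : ((Tgen N ε)^t).mulVec (fun k : Fin N => p0 * w ^ (k : ℕ)) k
        = p0 * w ^ (k : ℕ) := by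
      rw [hsm, Matrix.mulVec_smul, stationary_pow N hN ε t]
      simp [smul_eq_mul, hwdef]
    simp only [Pi.sub_apply, hstat]
  set z : ℝ := Real.exp ε + Real.exp (-ε) with hzdef
  set l : ℝ := p0 * w ^ (N-1) with hldef
  have hl0 : 0 < l := by positivity
  have hct : (2/z)^t ≤ ξ * l := ht'
  set Sm : ℝ := ∑ k ∈ Finset.range (N-1), w ^ k with hSmdef
  set Sp : ℝ := ∑ k ∈ Finset.range (N-1), (w⁻¹) ^ k with hSpdef
  have hSm0 : 0 ≤ Sm := Finset.sum_nonneg fun k _ => by positivity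
  have hSp0 : 0 ≤ Sp := Finset.sum_nonneg fun k _ => by positivity
  set A : ℝ := ∑ k ∈ Finset.range (N-1), |cum y k| with hAdef
  have hA0 : 0 ≤ A := Finset.sum_nonneg fun k _ => abs_nonneg _
  have hCS : A^2 ≤ Sm * phi ε y := cum_abs_CS N ε y
  have hcum1 : ∀ k, |cum x k| ≤ 1 := by
    intro k
    have hv0 : 0 ≤ cum v k := Finset.sum_nonneg fun j _ => hv j
    have hv1' : cum v k ≤ 1 := by
      rw [← hv1, cum]
      exact Finset.sum_le_sum_of_subset_of_nonneg (Finset.filter_subset _ _)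
        (fun j _ _ => hv j)
    have hμ0 : 0 ≤ cum (fun k : Fin N => p0 * w ^ (k : ℕ)) k :=
      Finset.sum_nonneg fun j _ => by positivity
    have hμ1' : cum (fun k : Fin N => p0 * w ^ (k : ℕ)) k ≤ 1 := by
      rw [← hμsum, cum]
      exact Finset.sum_le_sum_of_subset_of_nonneg (Finset.filter_subset _ _)
        (fun j _ _ => by positivity)
    rw [hxdef, cum_sub, abs_le]
    constructor <;> linarith
  have hinit : phi ε x ≤ Sp := by
    have h := phi_le_init N ε x hcum1
    have hrw : ∀ k : ℕ, (Real.exp (2*ε)) ^ k = (w⁻¹) ^ k := by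
      intro k
      rw [hwdef, ← Real.exp_neg]
      ring_nf
    rwa [Finset.sum_congr rfl fun k _ => hrw k] at h
  have hcontr : phi ε y ≤ ((2/z)^2)^t * phi ε x := by
    rw [hydef]
    exact (iterate_bound N hN ε x hxsum t).2
  have hkey : l^2 * (Sm * Sp) ≤ 1 := by
    have h := key_ineq w hw0 hw1 (N-1)
    rwa [show N - 1 + 1 = N by omega] at h
  have hAξ : A ≤ ξ := by
    have hphix : 0 ≤ phi ε x := phi_nonneg ε x
    have hb1 : phi ε y ≤ ((2/z)^2)^t * Sp :=
      le_trans hcontr (mul_le_mul_of_nonneg_left hinit (by positivity))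
    have hb2 : A^2 ≤ ((2/z)^t)^2 * (Sm * Sp) := by
      have h := le_trans hCS (mul_le_mul_of_nonneg_left hb1 hSm0)
      calc A^2 ≤ Sm * (((2/z)^2)^t * Sp) := h
        _ = ((2/z)^t)^2 * (Sm * Sp) := by
            rw [← pow_mul, ← pow_mul, mul_comm 2 t]; ring
    have hb3 : ((2/z)^t)^2 ≤ (ξ*l)^2 :=
      pow_le_pow_left₀ (by positivity) hct 2
    have hb4 : A^2 ≤ (ξ*l)^2 * (Sm * Sp) :=
      le_trans hb2 (mul_le_mul_of_nonneg_right hb3 (mul_nonneg hSm0 hSp0))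
    have hb5 : (ξ*l)^2 * (Sm * Sp) ≤ ξ^2 := by
      calc (ξ*l)^2 * (Sm * Sp) = ξ^2 * (l^2 * (Sm * Sp)) := by ring
        _ ≤ ξ^2 * 1 := mul_le_mul_of_nonneg_left hkey (sq_nonneg _)
        _ = ξ^2 := mul_one _
    nlinarith
  have hsum : ∑ k : Fin N, |((Tgen N ε ^ t).mulVec v) k - p0 * w ^ (k : ℕ)|
      = ∑ i, |y i| :=
    Finset.sum_congr rfl fun k _ => by rw [hvec k]
  have h2A := abs_sum_le_two_cum N hN y hysum
  calc (1/2) * ∑ k : Fin N, |((Tgen N ε ^ t).mulVec v) k - p0 * w ^ (k : ℕ)|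
      = (1/2) * ∑ i, |y i| := by rw [hsum]
    _ ≤ (1/2) * (2 * A) := by linarith
    _ = A := by ring
    _ ≤ ξ := hAξ

lemma two_lt_z (ε : ℝ) (hε : 0 < ε) : 2 < Real.exp ε + Real.exp (-ε) := by
  have h1 : Real.exp (ε/2) * Real.exp (ε/2) = Real.exp ε := by
    rw [← Real.exp_add]; ring_nf
  have h2 : Real.exp (-(ε/2)) * Real.exp (-(ε/2)) = Real.exp (-ε) := by
    rw [← Real.exp_add]; ring_nf
  have h3 : Real.exp (ε/2) * Real.exp (-(ε/2)) = 1 := by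
    rw [← Real.exp_add]; simp
  have hne : Real.exp (ε/2) ≠ Real.exp (-(ε/2)) := by
    intro hcon
    rw [Real.exp_eq_exp] at hcon
    linarith
  nlinarith [mul_self_pos.2 (sub_ne_zero.2 hne), h1, h2, h3]

theorem tsac_mixing_time_final (n : ℕ) (hn : 1 ≤ n) (ε : ℝ) (hε : 0 < ε)
    (v : Fin (2 ^ n) → ℝ) (hv : ∀ k, 0 ≤ v k) (hv1 : ∑ k, v k = 1)
    (ξ : ℝ) (hξ : 0 < ξ) (t : ℕ)
    (ht : (t : ℝ) ≥
      (Real.exp ε + Real.exp (-ε)) / (Real.exp ε + Real.exp (-ε) - 2) *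
        Real.log (1 / (ξ *
          ((1 - Real.exp (-2 * ε)) / (1 - Real.exp (-2 * ε * 2 ^ n)) *
            Real.exp (-2 * ε * (2 ^ n - 1)))))) :
    (1 / 2) * ∑ k, |((Tgen (2^n) ε ^ t).mulVec v) k -
        (1 - Real.exp (-2 * ε)) / (1 - Real.exp (-2 * ε * 2 ^ n)) *
          Real.exp (-2 * ε * (k : ℕ))| ≤ ξ := by
  have hN : 2 ≤ 2^n := by
    calc 2 = 2^1 := by norm_num
      _ ≤ 2^n := Nat.pow_le_pow_right (by norm_num) hn
  have e1 : Real.exp (-2 * ε) = Real.exp (-(2*ε)) := by rw [neg_mul]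
  have e2 : Real.exp (-2 * ε * 2^n) = Real.exp (-(2*ε)) ^ (2^n : ℕ) := by
    rw [show (-2:ℝ) * ε * 2^n = ((2^n : ℕ) : ℝ) * (-(2*ε)) by push_cast; ring,
      Real.exp_nat_mul]
  have e4 : Real.exp (-2 * ε * (2^n - 1)) = Real.exp (-(2*ε)) ^ (2^n - 1 : ℕ) := by
    rw [show (-2:ℝ) * ε * ((2:ℝ)^n - 1) = ((2^n - 1 : ℕ) : ℝ) * (-(2*ε)) by
        rw [Nat.cast_sub (Nat.one_le_two_pow)]; push_cast; ring,
      Real.exp_nat_mul]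
  have e3 : ∀ k : Fin (2^n), Real.exp (-2 * ε * (k:ℕ)) = Real.exp (-(2*ε)) ^ (k:ℕ) :=
    fun k => by
      rw [show (-2:ℝ) * ε * ((k:ℕ):ℝ) = ((k:ℕ):ℝ) * (-(2*ε)) by ring, Real.exp_nat_mul]
  rw [ge_iff_le, e1, e2, e4] at ht
  simp only [e1, e2, e3]
  apply main_gen (2^n) hN ε hε v hv hv1 ξ hξ t
  -- remains: ht'
  set w : ℝ := Real.exp (-(2*ε)) with hwdef
  have hw0 : 0 < w := Real.exp_pos _
  have hw1 : w < 1 := by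
    rw [hwdef, Real.exp_lt_one_iff]; linarith
  have hwN1 : w ^ (2^n) < 1 := pow_lt_one₀ hw0.le hw1 (by omega)
  have hl0 : 0 < (1 - w) / (1 - w ^ (2^n)) * w ^ (2^n - 1) := by
    have : 0 < (1 - w) / (1 - w ^ (2^n)) := div_pos (by linarith) (by linarith)
    positivity
  exact pow_le_xil (Real.exp ε + Real.exp (-ε)) ξ _ (two_lt_z ε hε) hξ hl0 t ht

/-- Mixing-time bound for the TSAC Markov chain: for any probability vector `v` and
any `ξ > 0`, if `t ≥ (z/(z-2))·log(1/(ξ·l))` with `l = p₀·e^{-2ε(N-1)}` the smallest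
entry of the stationary distribution `p₀·π`, then the total variation distance
between `T^t v` and `p₀·π` is at most `ξ`. -/
theorem tsac_mixing_time (n : ℕ) (hn : 1 ≤ n) (ε : ℝ) (hε : 0 < ε)
    (v : Fin (2 ^ n) → ℝ) (hv : ∀ k, 0 ≤ v k) (hv1 : ∑ k, v k = 1)
    (ξ : ℝ) (hξ : 0 < ξ) (t : ℕ)
    (ht : (t : ℝ) ≥
      (Real.exp ε + Real.exp (-ε)) / (Real.exp ε + Real.exp (-ε) - 2) *
        Real.log (1 / (ξ *
          ((1 - Real.exp (-2 * ε)) / (1 - Real.exp (-2 * ε * 2 ^ n)) *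
            Real.exp (-2 * ε * (2 ^ n - 1)))))) :
    (1 / 2) * ∑ k, |((Tmat n ε ^ t).mulVec v) k -
        (1 - Real.exp (-2 * ε)) / (1 - Real.exp (-2 * ε * 2 ^ n)) *
          Real.exp (-2 * ε * (k : ℕ))| ≤ ξ := by
  have h := tsac_mixing_time_final n hn ε hε v hv hv1 ξ hξ t ht
  rw [show Tmat n ε = Tgen (2^n) ε from rfl]
  exact h
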